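/- ∏_{n≥0} [((n+1)(4n+5)) / ((n+2)(4n+1))]^{t_n} = √2, and ∏_{n≥0} [((8n+1)(8n+7)) / ((8n+3)(8n+5))]^{t_n} = √(2√2 − 2). -/

import Mathlib

open Filter Finset Topology



/-- The Thue–Morse sequence: sum modulo 2 of the binary digits of `n`. -/
def tm (n : ℕ) : ℕ := (Nat.digits 2 n).sum % 2

lemma tm_le_one (n : ℕ) : tm n ≤ 1 := Nat.lt_succ_iff.mp (Nat.mod_lt _ (by norm_num))

lemma tm_two_mul (n : ℕ) : tm (2 * n) = tm n := by
  rcases Nat.eq_zero_or_pos n with h | h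
  · simp [h]
  · unfold tm
    rw [Nat.digits_def' (by norm_num : 1 < 2) (by omega)]
    simp [Nat.mul_mod_right, Nat.mul_div_cancel_left _ (by norm_num : 0 < 2)]

lemma tm_two_mul_add_one (n : ℕ) : tm (2 * n + 1) = 1 - tm n := by
  unfold tm
  rw [Nat.digits_def' (by norm_num : 1 < 2) (by omega)]
  have h1 : (2 * n + 1) % 2 = 1 := by omega
  have h2 : (2 * n + 1) / 2 = n := by omega
  rw [h1, h2]
  simp only [List.sum_cons]
  omega

noncomputable def eps (n : ℕ) : ℤ := (-1) ^ tm n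

lemma eps_eq_or (n : ℕ) : eps n = 1 ∨ eps n = -1 := by
  have := tm_le_one n
  interval_cases h : tm n <;> simp [eps, h]

lemma eps_two_mul (n : ℕ) : eps (2 * n) = eps n := by rw [eps, eps, tm_two_mul]

lemma eps_two_mul_add_one (n : ℕ) : eps (2 * n + 1) = -eps n := by
  have := tm_le_one n
  rw [eps, eps, tm_two_mul_add_one]
  interval_cases h : tm n <;> norm_num

lemma epsProd_pair (g : ℕ → ℝ) (N : ℕ) :
    ∏ n ∈ range (2 * N), g n ^ eps n
      = ∏ m ∈ range N, (g (2 * m) ^ eps m * g (2 * m + 1) ^ (-eps m)) := by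
  induction N with
  | zero => simp
  | succ N ih =>
    rw [Finset.prod_range_succ, ← ih, show 2 * (N + 1) = (2 * N + 1) + 1 by ring,
      Finset.prod_range_succ, Finset.prod_range_succ, eps_two_mul, eps_two_mul_add_one, mul_assoc]

lemma eps_zero : eps 0 = 1 := by
  have : tm 0 = 0 := by simp [tm]
  simp [eps, this]

lemma eps_def (n : ℕ) : eps n = (-1) ^ tm n := rfl
lemma tendsto_even_odd {u : ℕ → ℝ} {l : ℝ}
    (he : Tendsto (fun N => u (2 * N)) atTop (𝓝 l))
    (ho : Tendsto (fun N => u (2 * N + 1)) atTop (𝓝 l)) : Tendsto u atTop (𝓝 l) := by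
  rw [Metric.tendsto_atTop] at he ho ⊢
  intro ε hε
  obtain ⟨N₁, h₁⟩ := he ε hε
  obtain ⟨N₂, h₂⟩ := ho ε hε
  refine ⟨2 * max N₁ N₂ + 2, fun n hn => ?_⟩
  rcases Nat.even_or_odd n with ⟨k, hk⟩ | ⟨k, hk⟩
  · have : n = 2 * k := by omega
    rw [this]; exact h₁ k (by omega)
  · have : n = 2 * k + 1 := by omega
    rw [this]; exact h₂ k (by omega)

lemma abs_log_le {x : ℝ} (hx : 1 / 2 ≤ x) : |Real.log x| ≤ 2 * |x - 1| := by
  have hx0 : 0 < x := by linarith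
  rcases le_or_gt 1 x with h | h
  · rw [abs_of_nonneg (Real.log_nonneg h), abs_of_nonneg (by linarith)]
    have := Real.log_le_sub_one_of_pos hx0
    linarith
  · rw [abs_of_nonpos (Real.log_nonpos hx0.le h.le), abs_of_neg (by linarith)]
    have h1 : Real.log x⁻¹ ≤ x⁻¹ - 1 := Real.log_le_sub_one_of_pos (by positivity)
    rw [Real.log_inv] at h1
    have h2 : x⁻¹ - 1 = (1 - x) / x := by field_simp
    have h3 : (1 - x) / x ≤ 2 * (1 - x) := by
      rw [div_le_iff₀ hx0]
      nlinarith
    linarith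

lemma summable_of_le_invsq (d : ℕ → ℝ) (C : ℝ) (M : ℕ)
    (h : ∀ m, M ≤ m → |d m| ≤ C / (m + 1 : ℝ) ^ 2) : Summable d := by
  have hC : 0 ≤ C := by
    have h1 := (abs_nonneg (d M)).trans (h M le_rfl)
    have h2 : (0:ℝ) < ((M:ℝ) + 1) ^ 2 := by positivity
    rcases div_nonneg_iff.mp h1 with ⟨h3, _⟩ | ⟨_, h4⟩
    · exact h3
    · nlinarith
  have base : Summable (fun m : ℕ => C / (m + 1 : ℝ) ^ 2) := by
    have : Summable (fun m : ℕ => 1 / (m : ℝ) ^ 2) :=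
      Real.summable_one_div_nat_pow.mpr one_lt_two
    have := ((_root_.summable_nat_add_iff 1).mpr this).mul_left C
    simpa [div_eq_mul_inv] using this
  rw [← summable_nat_add_iff M]
  apply Summable.of_abs
  apply Summable.of_nonneg_of_le (fun m => abs_nonneg _) (fun m => ?_)
    (((_root_.summable_nat_add_iff M).mpr base))
  calc |d (m + M)| ≤ C / ((m + M : ℕ) + 1 : ℝ) ^ 2 := h (m + M) (by omega)
    _ = C / ((m + M : ℕ) + 1 : ℝ) ^ 2 := rfl

lemma zpow_pm_one_tendsto_one {x : ℕ → ℝ} {ι : ℕ → ℤ}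
    (hx : ∀ n, 0 < x n) (hι : ∀ n, ι n = 1 ∨ ι n = -1)
    (h1 : Tendsto x atTop (𝓝 1)) : Tendsto (fun n => x n ^ ι n) atTop (𝓝 1) := by
  have hmin : Tendsto (fun n => min (x n) (x n)⁻¹) atTop (𝓝 1) := by
    simpa using h1.min (h1.inv₀ one_ne_zero)
  have hmax : Tendsto (fun n => max (x n) (x n)⁻¹) atTop (𝓝 1) := by
    simpa using h1.max (h1.inv₀ one_ne_zero)
  refine tendsto_of_tendsto_of_tendsto_of_le_of_le hmin hmax ?_ ?_ <;> intro n <;>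
    rcases hι n with h | h <;> simp [h, min_le_left, min_le_right, le_max_left, le_max_right]
lemma tendsto_two_mul : Tendsto (fun N : ℕ => 2 * N) atTop atTop :=
  tendsto_atTop_mono (fun n => by simp only [id_eq]; omega) tendsto_id

lemma tendsto_PP (g : ℕ → ℝ) (hg : ∀ n, 0 < g n) (hg1 : Tendsto g atTop (𝓝 1))
    (hs : Summable (fun m => Real.log (g (2 * m) ^ eps m * g (2 * m + 1) ^ (-eps m)))) :
    ∃ L : ℝ, 0 < L ∧ Tendsto (fun N => ∏ n ∈ range N, g n ^ eps n) atTop (𝓝 L) := by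
  set w : ℕ → ℝ := fun m => g (2 * m) ^ eps m * g (2 * m + 1) ^ (-eps m) with hw
  have hwpos : ∀ m, 0 < w m := fun m => mul_pos (zpow_pos (hg _) _) (zpow_pos (hg _) _)
  refine ⟨Real.exp (∑' m, Real.log (w m)), Real.exp_pos _, ?_⟩
  have heven : Tendsto (fun N => ∏ n ∈ range (2 * N), g n ^ eps n) atTop
      (𝓝 (Real.exp (∑' m, Real.log (w m)))) := by
    have h1 : ∀ N, ∏ n ∈ range (2 * N), g n ^ eps n
        = Real.exp (∑ m ∈ range N, Real.log (w m)) := by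
      intro N
      rw [epsProd_pair, Real.exp_sum]
      exact Finset.prod_congr rfl fun m _ => (Real.exp_log (hwpos m)).symm
    simp_rw [h1]
    exact (Real.continuous_exp.tendsto _).comp hs.hasSum.tendsto_sum_nat
  refine tendsto_even_odd heven ?_
  have h2 : Tendsto (fun N => g (2 * N) ^ eps (2 * N)) atTop (𝓝 1) := by
    have : Tendsto (fun N : ℕ => g (2 * N)) atTop (𝓝 1) := hg1.comp tendsto_two_mul
    exact zpow_pm_one_tendsto_one (fun N => hg _) (fun N => eps_eq_or _) this
  have h1 : ∀ N, ∏ n ∈ range (2 * N + 1), g n ^ eps n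
      = (∏ n ∈ range (2 * N), g n ^ eps n) * g (2 * N) ^ eps (2 * N) :=
    fun N => Finset.prod_range_succ _ _
  simp_rw [h1]
  simpa using heven.mul h2
lemma abs_eps (n : ℕ) : |(eps n : ℝ)| = 1 := by
  rcases eps_eq_or n with h | h <;> simp [h]

lemma tendsto_q_one {a b : ℝ} (hb : 0 < b) :
    Tendsto (fun n : ℕ => ((n : ℝ) + a) / ((n : ℝ) + b)) atTop (𝓝 1) := by
  have hatop : Tendsto (fun n : ℕ => (n : ℝ) + b) atTop atTop :=
    tendsto_atTop_add_const_right _ b tendsto_natCast_atTop_atTop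
  have h0 : Tendsto (fun n : ℕ => (a - b) / ((n : ℝ) + b)) atTop (𝓝 0) :=
    Tendsto.div_atTop tendsto_const_nhds hatop
  have heq : ∀ n : ℕ, ((n : ℝ) + a) / ((n : ℝ) + b) = 1 + (a - b) / ((n : ℝ) + b) := by
    intro n
    have hnb : (n : ℝ) + b ≠ 0 := by positivity
    field_simp
    ring
  simp_rw [heq]
  simpa using (tendsto_const_nhds (x := (1:ℝ))).add h0

lemma exists_fab_gen {a b : ℝ} (ha : 0 < a) (hb : 0 < b) :
    ∃ L : ℝ, 0 < L ∧
      Tendsto (fun N => ∏ n ∈ range N, (((n : ℝ) + a) / ((n : ℝ) + b)) ^ eps n)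
        atTop (𝓝 L) := by
  set g : ℕ → ℝ := fun n => ((n : ℝ) + a) / ((n : ℝ) + b) with hgdef
  have hg : ∀ n, 0 < g n := fun n => by positivity
  refine tendsto_PP g hg (tendsto_q_one hb) ?_
  apply summable_of_le_invsq _ (2 * |a - b|) (Nat.ceil |a - b| + 1)
  intro m hm
  have hm1 : (1 : ℕ) ≤ m := le_trans (by omega) hm
  have hmab : |a - b| ≤ (m : ℝ) := by
    calc |a - b| ≤ (Nat.ceil |a - b| : ℝ) := Nat.le_ceil _
    _ ≤ (m : ℝ) := by exact_mod_cast le_trans (by omega) hm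
  set x : ℝ := ((2 * (m:ℝ) + a) * (2 * (m:ℝ) + 1 + b)) / ((2 * (m:ℝ) + b) * (2 * (m:ℝ) + 1 + a))
    with hxdef
  have hden : (0:ℝ) < (2 * (m:ℝ) + b) * (2 * (m:ℝ) + 1 + a) := by positivity
  have hw : g (2 * m) ^ eps m * g (2 * m + 1) ^ (-eps m) = x ^ eps m := by
    rw [zpow_neg, ← div_eq_mul_inv, ← div_zpow]
    congr 1
    rw [hgdef, hxdef]
    have h1 : ((2 * m : ℕ) : ℝ) = 2 * (m : ℝ) := by push_cast; ring
    have h2 : ((2 * m + 1 : ℕ) : ℝ) = 2 * (m : ℝ) + 1 := by push_cast; ring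
    simp only
    rw [h1, h2]
    have d1 : (2 * (m:ℝ) + b) ≠ 0 := by positivity
    have d2 : (2 * (m:ℝ) + 1 + b) ≠ 0 := by positivity
    have d3 : (2 * (m:ℝ) + 1 + a) ≠ 0 := by positivity
    field_simp
  rw [hw]
  have hxpos : 0 < x := by positivity
  have hlog : Real.log (x ^ eps m) = eps m * Real.log x := Real.log_zpow _ _
  rw [hlog, abs_mul, abs_eps, one_mul]
  have hx1 : x - 1 = (a - b) / ((2 * (m:ℝ) + b) * (2 * (m:ℝ) + 1 + a)) := by
    rw [hxdef]
    field_simp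
    ring
  have habs : |x - 1| = |a - b| / ((2 * (m:ℝ) + b) * (2 * (m:ℝ) + 1 + a)) := by
    rw [hx1, abs_div, abs_of_pos hden]
  have hdenge : 2 * (m:ℝ) ≤ (2 * (m:ℝ) + b) * (2 * (m:ℝ) + 1 + a) := by nlinarith
  have hm0 : (0:ℝ) < (m:ℝ) := by exact_mod_cast hm1
  have hxhalf : 1 / 2 ≤ x := by
    have h1 : |x - 1| ≤ |a - b| / (2 * (m:ℝ)) := by
      rw [habs]
      apply div_le_div_of_nonneg_left (abs_nonneg _) (by linarith) hdenge
    have h2 : |a - b| / (2 * (m:ℝ)) ≤ 1 / 2 := by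
      rw [div_le_div_iff₀ (by linarith) (by norm_num)]
      nlinarith
    have := abs_le.mp (h1.trans h2)
    linarith [this.1]
  calc |Real.log x| ≤ 2 * |x - 1| := abs_log_le hxhalf
    _ = 2 * |a - b| / ((2 * (m:ℝ) + b) * (2 * (m:ℝ) + 1 + a)) := by rw [habs]; ring
    _ ≤ 2 * |a - b| / ((m:ℝ) + 1) ^ 2 := by
        apply div_le_div_of_nonneg_left (by positivity) (by positivity)
        have hm1' : (1:ℝ) ≤ (m:ℝ) := by exact_mod_cast hm1
        nlinarith [mul_nonneg ha.le hm0.le, mul_nonneg hb.le (show (0:ℝ) ≤ 2*(m:ℝ)+1+a by linarith), sq_nonneg ((m:ℝ)-1)]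
noncomputable def uu (a b : ℝ) (N : ℕ) : ℝ :=
  ∏ n ∈ range N, (((n : ℝ) + a) / ((n : ℝ) + b)) ^ eps n

lemma exists_fab {a : ℝ} (ha : 0 < a) :
    ∃ L : ℝ, 0 < L ∧ Tendsto (uu a 1) atTop (𝓝 L) := by
  obtain ⟨L, hL, hT⟩ := exists_fab_gen ha one_pos
  exact ⟨L, hL, hT⟩

lemma uu_pos {a b : ℝ} (ha : 0 < a) (hb : 0 < b) (N : ℕ) : 0 < uu a b N :=
  Finset.prod_pos fun n _ => zpow_pos (by positivity) _

lemma uu_one_one (N : ℕ) : uu 1 1 N = 1 := by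
  unfold uu
  apply Finset.prod_eq_one
  intro n _
  rw [div_self (by positivity), one_zpow]

lemma uu_div {a b : ℝ} (ha : 0 < a) (hb : 0 < b) (N : ℕ) :
    uu a b N = uu a 1 N / uu b 1 N := by
  unfold uu
  rw [← Finset.prod_div_distrib]
  apply Finset.prod_congr rfl
  intro n _
  rw [← div_zpow]
  congr 1
  have h1 : (n : ℝ) + 1 ≠ 0 := by positivity
  have h2 : (n : ℝ) + b ≠ 0 := by positivity
  field_simp

lemma tendsto_uu_div {a b A B : ℝ} (ha : 0 < a) (hb : 0 < b) (hBpos : 0 < B)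
    (hA : Tendsto (uu a 1) atTop (𝓝 A)) (hB : Tendsto (uu b 1) atTop (𝓝 B)) :
    Tendsto (uu a b) atTop (𝓝 (A / B)) := by
  have := hA.div hB hBpos.ne'
  exact this.congr fun N => (uu_div ha hb N).symm

lemma star_finite {a : ℝ} (ha : 0 < a) (N : ℕ) :
    uu a 1 (2 * N) = uu (a / 2) ((a + 1) / 2) N * uu 1 (1 / 2) N := by
  unfold uu
  rw [epsProd_pair, ← Finset.prod_mul_distrib]
  apply Finset.prod_congr rfl
  intro m _
  have h1 : ((2 * m : ℕ) : ℝ) = 2 * (m : ℝ) := by push_cast; ring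
  have h2 : ((2 * m + 1 : ℕ) : ℝ) = 2 * (m : ℝ) + 1 := by push_cast; ring
  rw [h1, h2, zpow_neg, ← div_eq_mul_inv, ← div_zpow, ← mul_zpow]
  congr 1
  have d1 : 2 * (m : ℝ) + 1 ≠ 0 := by positivity
  have d2 : 2 * (m : ℝ) + 1 + a ≠ 0 := by positivity
  have d3 : 2 * (m : ℝ) + 1 + 1 ≠ 0 := by positivity
  have d4 : (m : ℝ) + (a + 1) / 2 ≠ 0 := by positivity
  have d5 : (m : ℝ) + 1 / 2 ≠ 0 := by positivity
  have d6 : (m : ℝ) + 1 ≠ 0 := by positivity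
  field_simp
  ring

lemma star_rel {a χa χh χl p : ℝ} (ha : 0 < a)
    (hA : Tendsto (uu a 1) atTop (𝓝 χa))
    (hH : Tendsto (uu (a / 2) 1) atTop (𝓝 χh))
    (hL : Tendsto (uu ((a + 1) / 2) 1) atTop (𝓝 χl)) (hlpos : 0 < χl)
    (hp : Tendsto (uu (1 / 2) 1) atTop (𝓝 p)) (hppos : 0 < p) :
    χh / χl = χa * p := by
  have h2 : (0:ℝ) < a / 2 := by linarith
  have h3 : (0:ℝ) < (a + 1) / 2 := by linarith
  have hD : Tendsto (uu (a / 2) ((a + 1) / 2)) atTop (𝓝 (χh / χl)) :=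
    tendsto_uu_div h2 h3 hlpos hH hL
  have hone : Tendsto (uu 1 1) atTop (𝓝 1) := by
    have h : uu 1 1 = fun _ => (1:ℝ) := funext uu_one_one
    rw [h]; exact tendsto_const_nhds
  have hHalf : Tendsto (uu 1 (1 / 2)) atTop (𝓝 (1 / p)) :=
    tendsto_uu_div one_pos (by norm_num) hppos hone hp
  have hlim1 : Tendsto (fun N => uu a 1 (2 * N)) atTop (𝓝 χa) := hA.comp tendsto_two_mul
  have hlim2 : Tendsto (fun N => uu a 1 (2 * N)) atTop (𝓝 (χh / χl * (1 / p))) := by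
    have := hD.mul hHalf
    exact this.congr fun N => (star_finite ha N).symm
  have := tendsto_nhds_unique hlim1 hlim2
  field_simp at this ⊢
  linarith [this]

noncomputable def hh (n : ℕ) : ℝ := if n = 0 then 1 else (n : ℝ) / ((n : ℝ) + 1)

lemma hh_pos (n : ℕ) : 0 < hh n := by
  unfold hh
  rcases Nat.eq_zero_or_pos n with h | h
  · simp [h]
  · rw [if_neg (by omega)]
    have : (0:ℝ) < n := by exact_mod_cast h
    positivity

lemma hh_eq {n : ℕ} (hn : 1 ≤ n) : hh n = (n : ℝ) / ((n : ℝ) + 1) := if_neg (by omega)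

lemma tendsto_hh_one : Tendsto hh atTop (𝓝 1) := by
  have h := tendsto_q_one (a := 0) (b := 1) one_pos
  apply h.congr'
  filter_upwards [eventually_ge_atTop 1] with n hn
  rw [hh_eq hn]; norm_num

lemma exists_R : ∃ R : ℝ, 0 < R ∧
    Tendsto (fun N => ∏ n ∈ range N, hh n ^ eps n) atTop (𝓝 R) := by
  apply tendsto_PP hh hh_pos tendsto_hh_one
  apply summable_of_le_invsq _ 2 1
  intro m hm
  have hm0 : (0:ℝ) < (m:ℝ) := by exact_mod_cast hm
  have h2m : hh (2 * m) = (2 * (m:ℝ)) / (2 * (m:ℝ) + 1) := by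
    rw [hh_eq (by omega)]; push_cast; ring_nf
  have h2m1 : hh (2 * m + 1) = (2 * (m:ℝ) + 1) / (2 * (m:ℝ) + 2) := by
    rw [hh_eq (by omega)]; push_cast; ring_nf
  set x : ℝ := (2 * (m:ℝ) * (2 * (m:ℝ) + 2)) / (2 * (m:ℝ) + 1) ^ 2 with hxdef
  have hxpos : 0 < x := by positivity
  have hw : hh (2 * m) ^ eps m * hh (2 * m + 1) ^ (-eps m) = x ^ eps m := by
    rw [zpow_neg, ← div_eq_mul_inv, ← div_zpow, h2m, h2m1, hxdef]
    congr 1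
    have d1 : 2 * (m : ℝ) + 1 ≠ 0 := by positivity
    have d2 : 2 * (m : ℝ) + 2 ≠ 0 := by positivity
    field_simp
  rw [hw, Real.log_zpow, abs_mul, abs_eps, one_mul]
  have hx1 : x - 1 = -(1 / (2 * (m:ℝ) + 1) ^ 2) := by
    rw [hxdef]
    have d1 : (2 * (m : ℝ) + 1) ^ 2 ≠ 0 := by positivity
    field_simp
    ring
  have habs : |x - 1| = 1 / (2 * (m:ℝ) + 1) ^ 2 := by
    rw [hx1, abs_neg, abs_of_pos (by positivity)]
  have hm1 : (1:ℝ) ≤ (m:ℝ) := by exact_mod_cast hm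
  have hxhalf : 1 / 2 ≤ x := by
    have h4 : 1 / (2 * (m:ℝ) + 1) ^ 2 ≤ 1 / 2 := by
      rw [div_le_div_iff₀ (by positivity) (by norm_num)]
      nlinarith
    linarith
  calc |Real.log x| ≤ 2 * |x - 1| := abs_log_le hxhalf
    _ = 2 * (1 / (2 * (m:ℝ) + 1) ^ 2) := by rw [habs]
    _ ≤ 2 / ((m:ℝ) + 1) ^ 2 := by
        rw [mul_one_div, div_le_div_iff₀ (by positivity) (by positivity)]
        nlinarith

lemma wr_perfactor (m : ℕ) : hh m ^ eps m
    = (hh (2 * m) ^ eps m * hh (2 * m + 1) ^ (-eps m))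
      * ((((m:ℝ) + 1 / 2) / ((m:ℝ) + 1)) ^ eps m) ^ 2 * (if m = 0 then (2:ℝ) else 1) := by
  rcases Nat.eq_zero_or_pos m with h | h
  · subst h
    rw [if_pos rfl, eps_zero]
    have h0 : hh 0 = 1 := if_pos rfl
    have h1 : hh 1 = 1 / 2 := by rw [hh_eq le_rfl]; norm_num
    rw [h0, h1]
    norm_num
  · rw [if_neg (by omega)]
    have hm0 : (0:ℝ) < (m:ℝ) := by exact_mod_cast h
    have h2m : hh (2 * m) = (2 * (m:ℝ)) / (2 * (m:ℝ) + 1) := by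
      rw [hh_eq (by omega)]; push_cast; ring_nf
    have h2m1 : hh (2 * m + 1) = (2 * (m:ℝ) + 1) / (2 * (m:ℝ) + 2) := by
      rw [hh_eq (by omega)]; push_cast; ring_nf
    rw [hh_eq h, h2m, h2m1]
    rcases eps_eq_or m with he | he <;> rw [he]
    · simp only [zpow_one, zpow_neg, zpow_one]
      have d1 : 2 * (m : ℝ) + 1 ≠ 0 := by positivity
      have d2 : 2 * (m : ℝ) + 2 ≠ 0 := by positivity
      have d3 : (m : ℝ) + 1 ≠ 0 := by positivity
      field_simp
    · simp only [zpow_neg_one, neg_neg, zpow_one, zpow_neg]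
      have d1 : 2 * (m : ℝ) + 1 ≠ 0 := by positivity
      have d2 : 2 * (m : ℝ) + 2 ≠ 0 := by positivity
      have d3 : (m : ℝ) + 1 ≠ 0 := by positivity
      have d4 : (m : ℝ) + 1/2 ≠ 0 := by positivity
      have d5 : (m : ℝ) ≠ 0 := hm0.ne'
      field_simp

lemma wr_finite {N : ℕ} (hN : 1 ≤ N) :
    ∏ n ∈ range N, hh n ^ eps n
      = 2 * (∏ n ∈ range (2 * N), hh n ^ eps n) * (uu (1 / 2) 1 N) ^ 2 := by
  have hprod2 : ∏ m ∈ range N, (if m = 0 then (2:ℝ) else 1) = 2 := by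
    rw [Finset.prod_eq_single_of_mem 0 (Finset.mem_range.mpr hN) (fun b _ hb => if_neg hb)]
    norm_num
  have key : ∏ n ∈ range N, hh n ^ eps n
      = ∏ m ∈ range N, ((hh (2 * m) ^ eps m * hh (2 * m + 1) ^ (-eps m))
          * ((((m:ℝ) + 1 / 2) / ((m:ℝ) + 1)) ^ eps m) ^ 2 * (if m = 0 then (2:ℝ) else 1)) :=
    Finset.prod_congr rfl fun m _ => wr_perfactor m
  rw [key, Finset.prod_mul_distrib, Finset.prod_mul_distrib, hprod2, epsProd_pair]
  unfold uu
  rw [Finset.prod_pow]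
  ring

lemma p_sq {p : ℝ} (hp : Tendsto (uu (1 / 2) 1) atTop (𝓝 p)) : p ^ 2 = 1 / 2 := by
  obtain ⟨R, hRpos, hR⟩ := exists_R
  have h1 : Tendsto (fun N => 2 * (∏ n ∈ range (2 * N), hh n ^ eps n) * (uu (1 / 2) 1 N) ^ 2)
      atTop (𝓝 (2 * R * p ^ 2)) :=
    ((tendsto_const_nhds (x := (2:ℝ))).mul (hR.comp tendsto_two_mul)).mul (hp.pow 2)
  have h2 : Tendsto (fun N => ∏ n ∈ range N, hh n ^ eps n) atTop (𝓝 (2 * R * p ^ 2)) := by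
    apply h1.congr'
    filter_upwards [eventually_ge_atTop 1] with N hN
    exact (wr_finite hN).symm
  have h3 := tendsto_nhds_unique hR h2
  nlinarith
lemma aprod (N : ℕ) : ∏ n ∈ range N,
    ((((n : ℝ) + 1) * (4 * (n : ℝ) + 5)) / (((n : ℝ) + 2) * (4 * (n : ℝ) + 1)))
      = (4 * (N : ℝ) + 1) / ((N : ℝ) + 1) := by
  induction N with
  | zero => norm_num
  | succ N ih =>
    rw [Finset.prod_range_succ, ih]
    have d1 : (N : ℝ) + 1 ≠ 0 := by positivity
    have d2 : (N : ℝ) + 2 ≠ 0 := by positivity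
    have d3 : 4 * (N : ℝ) + 1 ≠ 0 := by positivity
    push_cast
    field_simp
    ring

lemma tendsto_aprod : Tendsto (fun N => ∏ n ∈ range N,
    ((((n : ℝ) + 1) * (4 * (n : ℝ) + 5)) / (((n : ℝ) + 2) * (4 * (n : ℝ) + 1))))
    atTop (𝓝 4) := by
  simp_rw [aprod]
  have h0 : Tendsto (fun N : ℕ => 3 / ((N : ℝ) + 1)) atTop (𝓝 0) :=
    Tendsto.div_atTop tendsto_const_nhds
      (tendsto_atTop_add_const_right _ 1 tendsto_natCast_atTop_atTop)
  have h1 : Tendsto (fun N : ℕ => 4 - 3 / ((N : ℝ) + 1)) atTop (𝓝 4) := by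
    simpa using (tendsto_const_nhds (x := (4:ℝ))).sub h0
  apply h1.congr
  intro N
  have d1 : (N : ℝ) + 1 ≠ 0 := by positivity
  field_simp
  ring

lemma sin_ratio : Real.sin (Real.pi * (1 / 8)) / Real.sin (Real.pi * (3 / 8))
    = Real.sqrt 2 - 1 := by
  have e1 : Real.pi * (1 / 8) = Real.pi / 8 := by ring
  have e2 : Real.pi * (3 / 8) = Real.pi / 2 - Real.pi / 8 := by ring
  rw [e1, e2, Real.sin_pi_div_two_sub, Real.sin_pi_div_eight, Real.cos_pi_div_eight]
  have h2 : (Real.sqrt 2) ^ 2 = 2 := Real.sq_sqrt (by norm_num)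
  have h1 : 1 ≤ Real.sqrt 2 := by nlinarith [Real.sqrt_nonneg 2]
  have hp : (0:ℝ) ≤ 2 + Real.sqrt 2 := by nlinarith
  have hkey : Real.sqrt (2 - Real.sqrt 2) = (Real.sqrt 2 - 1) * Real.sqrt (2 + Real.sqrt 2) := by
    have hsq : ((Real.sqrt 2 - 1) * Real.sqrt (2 + Real.sqrt 2)) ^ 2 = 2 - Real.sqrt 2 := by
      rw [mul_pow, Real.sq_sqrt hp]; nlinarith
    rw [← hsq, Real.sqrt_sq (mul_nonneg (by linarith) (Real.sqrt_nonneg _))]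
  have hne : Real.sqrt (2 + Real.sqrt 2) ≠ 0 :=
    (Real.sqrt_pos.mpr (by nlinarith)).ne'
  rw [div_div_div_cancel_right₀ (by norm_num : (2:ℝ) ≠ 0)]
  rw [hkey, mul_div_assoc, div_self hne, mul_one]

lemma gamma_ratio : Real.Gamma (3/8) * Real.Gamma (5/8) / (Real.Gamma (1/8) * Real.Gamma (7/8))
    = Real.sqrt 2 - 1 := by
  have h38 : Real.Gamma (3/8) * Real.Gamma (5/8) = Real.pi / Real.sin (Real.pi * (3/8)) := by
    have := Real.Gamma_mul_Gamma_one_sub (3/8)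
    norm_num at this ⊢
    convert this using 3 <;> norm_num
  have h18 : Real.Gamma (1/8) * Real.Gamma (7/8) = Real.pi / Real.sin (Real.pi * (1/8)) := by
    have := Real.Gamma_mul_Gamma_one_sub (1/8)
    norm_num at this ⊢
    convert this using 3 <;> norm_num
  have hs1 : 0 < Real.sin (Real.pi * (1/8)) := by
    apply Real.sin_pos_of_pos_of_lt_pi <;> nlinarith [Real.pi_pos]
  have hs3 : 0 < Real.sin (Real.pi * (3/8)) := by
    apply Real.sin_pos_of_pos_of_lt_pi <;> nlinarith [Real.pi_pos]
  rw [h38, h18, div_div_div_comm, div_self Real.pi_pos.ne', one_div_div, sin_ratio]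

lemma bfactor (n : ℕ) : ((8 * (n:ℝ) + 1) * (8 * (n:ℝ) + 7)) / ((8 * (n:ℝ) + 3) * (8 * (n:ℝ) + 5))
    = ((1/8 + (n:ℝ)) * (7/8 + (n:ℝ))) / ((3/8 + (n:ℝ)) * (5/8 + (n:ℝ))) := by
  rw [div_eq_div_iff (by positivity) (by positivity)]
  ring

lemma bprod {N : ℕ} (hN : 1 ≤ N) :
    ∏ n ∈ range (N + 1), ((8 * (n:ℝ) + 1) * (8 * (n:ℝ) + 7)) / ((8 * (n:ℝ) + 3) * (8 * (n:ℝ) + 5))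
      = Real.GammaSeq (3/8) N * Real.GammaSeq (5/8) N
        / (Real.GammaSeq (1/8) N * Real.GammaSeq (7/8) N) := by
  have hN0 : (0:ℝ) < (N:ℝ) := by exact_mod_cast hN
  have hB : ∀ x : ℝ, 0 < x → 0 < ∏ j ∈ range (N + 1), (x + (j:ℝ)) :=
    fun x hx => Finset.prod_pos fun j _ => by positivity
  have hLHS : ∏ n ∈ range (N + 1),
      ((8 * (n:ℝ) + 1) * (8 * (n:ℝ) + 7)) / ((8 * (n:ℝ) + 3) * (8 * (n:ℝ) + 5))
      = (∏ j ∈ range (N + 1), ((1/8:ℝ) + (j:ℝ))) * (∏ j ∈ range (N + 1), ((7/8:ℝ) + (j:ℝ)))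
        / ((∏ j ∈ range (N + 1), ((3/8:ℝ) + (j:ℝ))) * (∏ j ∈ range (N + 1), ((5/8:ℝ) + (j:ℝ)))) := by
    rw [← Finset.prod_mul_distrib, ← Finset.prod_mul_distrib, ← Finset.prod_div_distrib]
    exact Finset.prod_congr rfl fun n _ => bfactor n
  rw [hLHS, Real.GammaSeq, Real.GammaSeq, Real.GammaSeq, Real.GammaSeq]
  have e1 : (N:ℝ) ^ (1/8 : ℝ) * (N:ℝ) ^ (7/8 : ℝ) = (N:ℝ) ^ (3/8 : ℝ) * (N:ℝ) ^ (5/8 : ℝ) := by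
    rw [← Real.rpow_add hN0, ← Real.rpow_add hN0]; norm_num
  have hfact : (0:ℝ) < (Nat.factorial N : ℝ) := by exact_mod_cast N.factorial_pos
  have hr : ∀ x : ℝ, 0 < (N:ℝ) ^ x := fun x => Real.rpow_pos_of_pos hN0 x
  obtain ⟨P1, hP1, hq1⟩ : ∃ P, 0 < P ∧ ∏ j ∈ range (N+1), ((1/8:ℝ) + (j:ℝ)) = P :=
    ⟨_, hB _ (by norm_num), rfl⟩
  obtain ⟨P2, hP2, hq2⟩ : ∃ P, 0 < P ∧ ∏ j ∈ range (N+1), ((3/8:ℝ) + (j:ℝ)) = P :=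
    ⟨_, hB _ (by norm_num), rfl⟩
  obtain ⟨P3, hP3, hq3⟩ : ∃ P, 0 < P ∧ ∏ j ∈ range (N+1), ((5/8:ℝ) + (j:ℝ)) = P :=
    ⟨_, hB _ (by norm_num), rfl⟩
  obtain ⟨P4, hP4, hq4⟩ : ∃ P, 0 < P ∧ ∏ j ∈ range (N+1), ((7/8:ℝ) + (j:ℝ)) = P :=
    ⟨_, hB _ (by norm_num), rfl⟩
  rw [hq1, hq2, hq3, hq4]
  rw [div_eq_div_iff (by positivity) (by positivity)]
  field_simp
  linear_combination e1

lemma tendsto_bprod : Tendsto (fun N => ∏ n ∈ range N,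
    ((8 * (n:ℝ) + 1) * (8 * (n:ℝ) + 7)) / ((8 * (n:ℝ) + 3) * (8 * (n:ℝ) + 5)))
    atTop (𝓝 (Real.sqrt 2 - 1)) := by
  have hpos : ∀ x : ℝ, 0 < x → 0 < Real.Gamma x := fun x hx => Real.Gamma_pos_of_pos hx
  have hden : (0:ℝ) < Real.Gamma (1/8) * Real.Gamma (7/8) :=
    mul_pos (hpos _ (by norm_num)) (hpos _ (by norm_num))
  have T : Tendsto (fun N => Real.GammaSeq (3/8) N * Real.GammaSeq (5/8) N
      / (Real.GammaSeq (1/8) N * Real.GammaSeq (7/8) N)) atTop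
      (𝓝 (Real.Gamma (3/8) * Real.Gamma (5/8) / (Real.Gamma (1/8) * Real.Gamma (7/8)))) :=
    ((Real.GammaSeq_tendsto_Gamma (3/8)).mul (Real.GammaSeq_tendsto_Gamma (5/8))).div
      ((Real.GammaSeq_tendsto_Gamma (1/8)).mul (Real.GammaSeq_tendsto_Gamma (7/8))) hden.ne'
  rw [gamma_ratio] at T
  have T2 : Tendsto (fun N => ∏ n ∈ range (N + 1),
      ((8 * (n:ℝ) + 1) * (8 * (n:ℝ) + 7)) / ((8 * (n:ℝ) + 3) * (8 * (n:ℝ) + 5))) atTop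
      (𝓝 (Real.sqrt 2 - 1)) := by
    apply T.congr'
    filter_upwards [eventually_ge_atTop 1] with N hN
    exact (bprod hN).symm
  exact (tendsto_add_atTop_iff_nat 1).mp T2
lemma final_combine (g : ℕ → ℝ) (hg : ∀ n, 0 < g n) {P E : ℝ} (hEpos : 0 < E)
    (hP : Tendsto (fun N => ∏ n ∈ range N, g n) atTop (𝓝 P))
    (hE : Tendsto (fun N => ∏ n ∈ range N, g n ^ eps n) atTop (𝓝 E)) :
    Tendsto (fun N => ∏ n ∈ range N, g n ^ tm n) atTop (𝓝 (Real.sqrt (P / E))) := by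
  have key : ∀ N, ∏ n ∈ range N, g n ^ tm n
      = Real.sqrt ((∏ n ∈ range N, g n) / (∏ n ∈ range N, g n ^ eps n)) := by
    intro N
    have h1 : (∏ n ∈ range N, g n ^ tm n) ^ 2 * (∏ n ∈ range N, g n ^ eps n)
        = ∏ n ∈ range N, g n := by
      rw [← Finset.prod_pow, ← Finset.prod_mul_distrib]
      apply Finset.prod_congr rfl
      intro n _
      have hgne := (hg n).ne'
      have ht := tm_le_one n
      interval_cases h : tm n
      · rw [eps_def, h]
        norm_num
      · rw [eps_def, h]
        simp only [pow_one, zpow_neg, zpow_one]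
        field_simp
    have hEN : 0 < ∏ n ∈ range N, g n ^ eps n :=
      Finset.prod_pos fun n _ => zpow_pos (hg n) _
    have hT : 0 ≤ ∏ n ∈ range N, g n ^ tm n :=
      Finset.prod_nonneg fun n _ => pow_nonneg (hg n).le _
    rw [← h1, mul_div_assoc, div_self hEN.ne', mul_one, Real.sqrt_sq hT]
  have := (hP.div hE hEpos.ne').sqrt
  exact this.congr fun N => (key N).symm

lemma EA_finite (N : ℕ) : ∏ n ∈ range N,
    (((((n:ℝ)) + 1) * (4 * (n:ℝ) + 5)) / (((n:ℝ) + 2) * (4 * (n:ℝ) + 1))) ^ eps n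
      = uu 1 2 N * uu (5/4) (1/4) N := by
  unfold uu
  rw [← Finset.prod_mul_distrib]
  apply Finset.prod_congr rfl
  intro n _
  rw [← mul_zpow]
  congr 1
  have d1 : (n:ℝ) + 2 ≠ 0 := by positivity
  have d2 : 4 * (n:ℝ) + 1 ≠ 0 := by positivity
  have d3 : (n:ℝ) + 1/4 ≠ 0 := by positivity
  field_simp

lemma EB_finite (N : ℕ) : ∏ n ∈ range N,
    (((8 * (n:ℝ) + 1) * (8 * (n:ℝ) + 7)) / ((8 * (n:ℝ) + 3) * (8 * (n:ℝ) + 5))) ^ eps n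
      = uu (1/8) (3/8) N * uu (7/8) (5/8) N := by
  unfold uu
  rw [← Finset.prod_mul_distrib]
  apply Finset.prod_congr rfl
  intro n _
  rw [← mul_zpow]
  congr 1
  have d1 : 8 * (n:ℝ) + 3 ≠ 0 := by positivity
  have d2 : 8 * (n:ℝ) + 5 ≠ 0 := by positivity
  have d3 : (n:ℝ) + 3/8 ≠ 0 := by positivity
  have d4 : (n:ℝ) + 5/8 ≠ 0 := by positivity
  field_simp

theorem prod_tn_pair :
    Tendsto (fun N => ∏ n ∈ Finset.range N,
        ((((n : ℝ) + 1) * (4 * (n : ℝ) + 5)) /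
          (((n : ℝ) + 2) * (4 * (n : ℝ) + 1))) ^ tm n)
      atTop (𝓝 (Real.sqrt 2)) ∧
    Tendsto (fun N => ∏ n ∈ Finset.range N,
        (((8 * (n : ℝ) + 1) * (8 * (n : ℝ) + 7)) /
          ((8 * (n : ℝ) + 3) * (8 * (n : ℝ) + 5))) ^ tm n)
      atTop (𝓝 (Real.sqrt (2 * Real.sqrt 2 - 2))) := by
  obtain ⟨c18, h18p, h18⟩ := exists_fab (show (0:ℝ) < 1/8 by norm_num)
  obtain ⟨c14, h14p, h14⟩ := exists_fab (show (0:ℝ) < 1/4 by norm_num)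
  obtain ⟨c38, h38p, h38⟩ := exists_fab (show (0:ℝ) < 3/8 by norm_num)
  obtain ⟨c12, h12p, h12⟩ := exists_fab (show (0:ℝ) < 1/2 by norm_num)
  obtain ⟨c58, h58p, h58⟩ := exists_fab (show (0:ℝ) < 5/8 by norm_num)
  obtain ⟨c34, h34p, h34⟩ := exists_fab (show (0:ℝ) < 3/4 by norm_num)
  obtain ⟨c78, h78p, h78⟩ := exists_fab (show (0:ℝ) < 7/8 by norm_num)
  obtain ⟨c54, h54p, h54⟩ := exists_fab (show (0:ℝ) < 5/4 by norm_num)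
  obtain ⟨c32, h32p, h32⟩ := exists_fab (show (0:ℝ) < 3/2 by norm_num)
  obtain ⟨c2, h2p, h2⟩ := exists_fab (show (0:ℝ) < 2 by norm_num)
  have hone : Tendsto (uu 1 1) atTop (𝓝 1) := by
    have h : uu 1 1 = fun _ => (1:ℝ) := funext uu_one_one
    rw [h]; exact tendsto_const_nhds
  have h12' : Tendsto (uu (1/2) 1) atTop (𝓝 c12) := h12
  have hp2 : c12 ^ 2 = 1 / 2 := p_sq h12'
  have A2 : (1:ℝ) / c32 = c2 * c12 := by
    apply star_rel (show (0:ℝ) < 2 by norm_num) h2 ?_ ?_ h32p h12' h12p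
    · convert hone using 2; norm_num
    · convert h32 using 2; norm_num
  have A32 : c34 / c54 = c32 * c12 := by
    apply star_rel (show (0:ℝ) < 3/2 by norm_num) h32 ?_ ?_ h54p h12' h12p
    · convert h34 using 2; norm_num
    · convert h54 using 2; norm_num
  have A12 : c14 / c34 = c12 * c12 := by
    apply star_rel (show (0:ℝ) < 1/2 by norm_num) h12 ?_ ?_ h34p h12' h12p
    · convert h14 using 2; norm_num
    · convert h34 using 2; norm_num
  have A14 : c18 / c58 = c14 * c12 := by
    apply star_rel (show (0:ℝ) < 1/4 by norm_num) h14 ?_ ?_ h58p h12' h12p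
    · convert h18 using 2; norm_num
    · convert h58 using 2; norm_num
  have A34 : c38 / c78 = c34 * c12 := by
    apply star_rel (show (0:ℝ) < 3/4 by norm_num) h34 ?_ ?_ h78p h12' h12p
    · convert h38 using 2; norm_num
    · convert h78 using 2; norm_num
  -- values of the eps-products
  have e2 : (1:ℝ) = c2 * c12 * c32 := by
    rw [div_eq_iff h32p.ne'] at A2; linarith
  have e32 : c34 = c32 * c12 * c54 := by
    rw [div_eq_iff h54p.ne'] at A32; linarith
  have e12 : c34 = 2 * c14 := by
    rw [div_eq_iff h34p.ne'] at A12
    nlinarith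
  have e14 : c18 = c14 * c12 * c58 := by
    rw [div_eq_iff h58p.ne'] at A14; linarith
  have e34 : c38 = c34 * c12 * c78 := by
    rw [div_eq_iff h78p.ne'] at A34; linarith
  have vEA : 1 / c2 * (c54 / c14) = 2 := by
    rw [div_mul_div_comm, one_mul, div_eq_iff (by positivity)]
    nlinarith [mul_pos h12p h32p]
  have vEB : c18 / c38 * (c78 / c58) = 1 / 2 := by
    rw [div_mul_div_comm, div_eq_div_iff (by positivity) (by norm_num)]
    linear_combination (2 * c78) * e14 - c58 * e34 - (c12 * c58 * c78) * e12
  have hEA : Tendsto (fun N => uu 1 2 N * uu (5/4) (1/4) N) atTop (𝓝 2) := by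
    have := (tendsto_uu_div one_pos two_pos h2p hone h2).mul
      (tendsto_uu_div (by norm_num) (by norm_num) h14p h54 h14)
    rwa [vEA] at this
  have hEB : Tendsto (fun N => uu (1/8) (3/8) N * uu (7/8) (5/8) N) atTop (𝓝 (1/2)) := by
    have := (tendsto_uu_div (by norm_num) (by norm_num) h38p h18 h38).mul
      (tendsto_uu_div (by norm_num) (by norm_num) h58p h78 h58)
    rwa [vEB] at this
  constructor
  · have hE : Tendsto (fun N => ∏ n ∈ range N,
        ((((n:ℝ)) + 1) * (4 * (n:ℝ) + 5) / (((n:ℝ) + 2) * (4 * (n:ℝ) + 1))) ^ eps n)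
        atTop (𝓝 2) := hEA.congr fun N => (EA_finite N).symm
    have := final_combine _ (fun n => by positivity) (by norm_num : (0:ℝ) < 2)
      tendsto_aprod hE
    convert this using 2
    rw [show (4:ℝ)/2 = 2 by norm_num]
  · have hE : Tendsto (fun N => ∏ n ∈ range N,
        ((8 * (n:ℝ) + 1) * (8 * (n:ℝ) + 7) / ((8 * (n:ℝ) + 3) * (8 * (n:ℝ) + 5))) ^ eps n)
        atTop (𝓝 (1/2)) := hEB.congr fun N => (EB_finite N).symm
    have := final_combine _ (fun n => by positivity) (by norm_num : (0:ℝ) < 1/2)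
      tendsto_bprod hE
    convert this using 2
    rw [show (Real.sqrt 2 - 1) / (1/2 : ℝ) = 2 * Real.sqrt 2 - 2 by
      rw [div_div_eq_mul_div, div_one]; ring]
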